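/- Let k ≥ 3 and r ≥ 0 be integers, and let X(x_1,x_2) be the two-variable chromatic symmetric function of the spider S(1^k,2^r) (i.e., X_G^α with α ≡ 1 and G = S(1^k,2^r)). Then c_{(r+k,r+1)}(X) = 1, c_{(r+k−1,r+2)}(X) = −1, and c_{(a,b)}(X) = 0 for all other pairs a ≥ b ≥ 0. Moreover, if H is the graph consisting of r+1 disjoint edges together with k−1 isolated vertices, then its two-variable chromatic symmetric function X_H satisfies c_{(r+k,r+1)}(X_H) ≥ 2^{r+1}, c_{(r+k−1,r+2)}(X_H) ≥ 2^{r+1}, and c_{(a,b)}(X_H) ≥ 0 for all a ≥ b ≥ 0. -/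

import Mathlib

/-- A proper multicoloring of type `α` with colors in `{1,2}` (here `Fin 2`): each
vertex `v` gets a set `κ v` of colors with `|κ v| = α v`, and adjacent vertices get
disjoint color sets. -/
def ProperMulti {V : Type} (G : SimpleGraph V) (α : V → ℕ)
    (κ : V → Finset (Fin 2)) : Prop :=
  (∀ v, (κ v).card = α v) ∧ ∀ u v, G.Adj u v → κ u ∩ κ v = ∅

/-- The two-variable polynomial `X_G^α(x₁,x₂) = Σ_κ x₁^{a₁(κ)} x₂^{a₂(κ)}`, summed
over all proper multicolorings `κ` of type `α` with colors in `{1,2}`, where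
`a_i(κ)` is the number of vertices whose color set contains `i`.  (This is the
two-variable specialization of Stanley's normalized chromatic symmetric function.) -/
noncomputable def Xpoly {V : Type} [Fintype V] (G : SimpleGraph V) (α : V → ℕ) :
    MvPolynomial (Fin 2) ℤ :=
  ∑ᶠ κ : {κ : V → Finset (Fin 2) // ProperMulti G α κ},
    (MvPolynomial.X 0) ^ (Finset.univ.filter fun v => (0 : Fin 2) ∈ κ.1 v).card *
      (MvPolynomial.X 1) ^ (Finset.univ.filter fun v => (1 : Fin 2) ∈ κ.1 v).card

/-- The two-row Schur coefficient `c_{(k,l)}(f) = [x₁^k x₂^l] f − [x₁^{k+1} x₂^{l-1}] f`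
of a polynomial in two variables, the second term being read as `0` when `l = 0`. -/
noncomputable def schurCoeff (f : MvPolynomial (Fin 2) ℤ) (k l : ℕ) : ℤ :=
  MvPolynomial.coeff (Finsupp.single 0 k + Finsupp.single 1 l) f -
    if l = 0 then 0
    else MvPolynomial.coeff (Finsupp.single 0 (k + 1) + Finsupp.single 1 (l - 1)) f

/-- A polynomial in two variables is 2-s-positive if all its two-row Schur
coefficients `c_{(k,l)}`, for `k ≥ l ≥ 0`, are nonnegative. -/
def TwoSPos (f : MvPolynomial (Fin 2) ℤ) : Prop :=
  ∀ k l : ℕ, l ≤ k → 0 ≤ schurCoeff f k l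

/-- Vertices of the spider `S(1ᵏ,2ʳ)`: a center adjacent to `k` leaves and to `r`
legs of length 2 (with middle vertices `mid i` and endpoints `tip i`). -/
inductive SpKRV (k r : ℕ) : Type
  | center : SpKRV k r
  | leaf : Fin k → SpKRV k r
  | mid : Fin r → SpKRV k r
  | tip : Fin r → SpKRV k r
  deriving DecidableEq, Fintype

/-- The edge relation of the spider `S(1ᵏ,2ʳ)`. -/
inductive SpKRRel (k r : ℕ) : SpKRV k r → SpKRV k r → Prop
  | cl (i : Fin k) : SpKRRel k r .center (.leaf i)
  | cm (i : Fin r) : SpKRRel k r .center (.mid i)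
  | mt (i : Fin r) : SpKRRel k r (.mid i) (.tip i)

/-- The spider `S(1ᵏ,2ʳ)` as a simple graph. -/
def spiderKR (k r : ℕ) : SimpleGraph (SpKRV k r) := SimpleGraph.fromRel (SpKRRel k r)

/-- Vertices of the graph consisting of `r+1` disjoint edges (with endpoints `e0 i`
and `e1 i`) together with `k-1` isolated vertices. -/
inductive MatchV (k r : ℕ) : Type
  | e0 : Fin (r + 1) → MatchV k r
  | e1 : Fin (r + 1) → MatchV k r
  | iso : Fin (k - 1) → MatchV k r
  deriving DecidableEq, Fintype

/-- The edge relation of the matching-plus-isolated-vertices graph. -/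
inductive MatchRel (k r : ℕ) : MatchV k r → MatchV k r → Prop
  | e (i : Fin (r + 1)) : MatchRel k r (.e0 i) (.e1 i)

/-- The graph of `r+1` disjoint edges together with `k-1` isolated vertices. -/
def matchGraph (k r : ℕ) : SimpleGraph (MatchV k r) := SimpleGraph.fromRel (MatchRel k r)


section Aux
open Finset MvPolynomial

lemma fin2_ne : ∀ a b : Fin 2, a ≠ b → a = b + 1 := by decide
lemma fin2_inter1 : ∀ b : Fin 2, ({b} ∩ {b+1} : Finset (Fin 2)) = ∅ := by decide
lemma fin2_inter2 : ∀ b : Fin 2, ({b+1} ∩ {b} : Finset (Fin 2)) = ∅ := by decide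
lemma fin2_succ_succ : ∀ b : Fin 2, b + 1 + 1 = b := by decide

lemma single_add_single_inj (a b p q : ℕ) :
    (Finsupp.single (0:Fin 2) p + Finsupp.single 1 q = Finsupp.single 0 a + Finsupp.single 1 b)
      ↔ (p = a ∧ q = b) := by
  constructor
  · intro h
    constructor
    · have := DFunLike.congr_fun h 0; simpa [Finsupp.single_apply] using this
    · have := DFunLike.congr_fun h 1; simpa [Finsupp.single_apply] using this
  · rintro ⟨rfl, rfl⟩; rfl

lemma coeff_mono (a b p q : ℕ) :
    MvPolynomial.coeff (Finsupp.single 0 a + Finsupp.single 1 b)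
      ((MvPolynomial.X 0 : MvPolynomial (Fin 2) ℤ) ^ p * MvPolynomial.X 1 ^ q)
      = if p = a ∧ q = b then 1 else 0 := by
  rw [X_pow_eq_monomial, X_pow_eq_monomial, monomial_mul, mul_one, coeff_monomial]
  simp only [single_add_single_inj]

lemma card_filter_card_eq (m j : ℕ) :
    ((Finset.univ : Finset (Finset (Fin m))).filter fun S => S.card = j).card = m.choose j := by
  rw [← Finset.powerset_univ, ← Finset.powersetCard_eq_filter, Finset.card_powersetCard,
    Finset.card_univ, Fintype.card_fin]

lemma choose_succ_le (n j : ℕ) (h : n ≤ 2*j) : n.choose (j+1) ≤ n.choose j := by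
  have h2 := Nat.choose_succ_right_eq n j
  have h3 : n - j ≤ j + 1 := by omega
  refine Nat.le_of_mul_le_mul_right ?_ (show 0 < j+1 by omega)
  rw [h2]
  exact Nat.mul_le_mul_left _ h3
open Finset MvPolynomial

def spCol {k r : ℕ} (b : Fin 2) : SpKRV k r → Fin 2
  | .center => b
  | .leaf _ => b + 1
  | .mid _ => b + 1
  | .tip _ => b

lemma spRel_ne {k r : ℕ} {u v : SpKRV k r} (h : SpKRRel k r u v) : u ≠ v := by
  cases h <;> simp

lemma spProper {k r : ℕ} (b : Fin 2) :
    ProperMulti (spiderKR k r) (fun _ => 1) (fun v => {spCol b v}) := by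
  refine ⟨fun v => Finset.card_singleton _, ?_⟩
  intro u v huv
  rw [spiderKR, SimpleGraph.fromRel_adj] at huv
  obtain ⟨hne, h | h⟩ := huv <;>
    cases h <;> simp only [spCol] <;>
    first | exact fin2_inter1 b | exact fin2_inter2 b

noncomputable def spKappa (k r : ℕ) (b : Fin 2) :
    {κ : SpKRV k r → Finset (Fin 2) // ProperMulti (spiderKR k r) (fun _ => 1) κ} :=
  ⟨fun v => {spCol b v}, spProper b⟩

lemma spKappa_bij (k r : ℕ) : Function.Bijective (spKappa k r) := by
  constructor
  · intro b b' h
    have := congrFun (congrArg Subtype.val h) SpKRV.center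
    simpa [spKappa, spCol] using this
  · rintro ⟨κ, hcard, hadj⟩
    have hex : ∀ v, ∃ a, κ v = {a} := fun v => Finset.card_eq_one.mp (hcard v)
    choose c hc using hex
    have hdis : ∀ u v, SpKRRel k r u v → c v ≠ c u := by
      intro u v h hcc
      have hadj' : κ u ∩ κ v = ∅ := by
        apply hadj
        rw [spiderKR, SimpleGraph.fromRel_adj]
        exact ⟨spRel_ne h, Or.inl h⟩
      rw [hc u, hc v, hcc] at hadj'
      simp at hadj'
    refine ⟨c SpKRV.center, ?_⟩
    apply Subtype.ext
    funext v
    show ({spCol (c SpKRV.center) v} : Finset (Fin 2)) = κ v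
    rw [hc v]
    congr 1
    cases v with
    | center => rfl
    | leaf i => exact (fin2_ne _ _ (hdis _ _ (SpKRRel.cl i))).symm
    | mid i => exact (fin2_ne _ _ (hdis _ _ (SpKRRel.cm i))).symm
    | tip i =>
      have h1 : c (SpKRV.mid i) = c SpKRV.center + 1 :=
        fin2_ne _ _ (hdis _ _ (SpKRRel.cm i))
      have h2 : c (SpKRV.tip i) = c (SpKRV.mid i) + 1 :=
        fin2_ne _ _ (hdis _ _ (SpKRRel.mt i))
      show spCol (c SpKRV.center) (SpKRV.tip i) = c (SpKRV.tip i)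
      rw [h2, h1, fin2_succ_succ]
      rfl

lemma card_ct (k r : ℕ) (p : SpKRV k r → Prop) [DecidablePred p]
    (hp : ∀ v, p v ↔ (v = .center ∨ ∃ i, v = .tip i)) :
    (Finset.univ.filter p).card = r + 1 := by
  have he : Finset.univ.filter p
      = insert SpKRV.center ((Finset.univ : Finset (Fin r)).image SpKRV.tip) := by
    ext v
    simp only [Finset.mem_filter, Finset.mem_univ, true_and, Finset.mem_insert,
      Finset.mem_image, hp v]
    constructor
    · rintro (rfl | ⟨i, rfl⟩)
      · exact Or.inl rfl
      · exact Or.inr ⟨i, rfl⟩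
    · rintro (rfl | ⟨i, rfl⟩)
      · exact Or.inl rfl
      · exact Or.inr ⟨i, rfl⟩
  rw [he, Finset.card_insert_of_notMem (by simp),
    Finset.card_image_of_injective _ (fun a b h => by simpa using h),
    Finset.card_univ, Fintype.card_fin]

lemma card_lm (k r : ℕ) (p : SpKRV k r → Prop) [DecidablePred p]
    (hp : ∀ v, p v ↔ ((∃ i, v = .leaf i) ∨ ∃ i, v = .mid i)) :
    (Finset.univ.filter p).card = k + r := by
  have he : Finset.univ.filter p
      = ((Finset.univ : Finset (Fin k)).image SpKRV.leaf)
          ∪ ((Finset.univ : Finset (Fin r)).image SpKRV.mid) := by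
    ext v
    simp only [Finset.mem_filter, Finset.mem_univ, true_and, Finset.mem_union,
      Finset.mem_image, hp v]
    constructor
    · rintro (⟨i, rfl⟩ | ⟨i, rfl⟩)
      · exact Or.inl ⟨i, rfl⟩
      · exact Or.inr ⟨i, rfl⟩
    · rintro (⟨i, rfl⟩ | ⟨i, rfl⟩)
      · exact Or.inl ⟨i, rfl⟩
      · exact Or.inr ⟨i, rfl⟩
  rw [he, Finset.card_union_of_disjoint (by simp [Finset.disjoint_left]),
    Finset.card_image_of_injective _ (fun a b h => by simpa using h),
    Finset.card_image_of_injective _ (fun a b h => by simpa using h),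
    Finset.card_univ, Finset.card_univ, Fintype.card_fin, Fintype.card_fin]

lemma xpoly_spider (k r : ℕ) :
    Xpoly (spiderKR k r) (fun _ => 1) =
      X 0 ^ (r+1) * X 1 ^ (k+r) + X 0 ^ (k+r) * X 1 ^ (r+1) := by
  haveI : Fintype {κ : SpKRV k r → Finset (Fin 2) // ProperMulti (spiderKR k r) (fun _ => 1) κ} :=
    Fintype.ofFinite _
  rw [Xpoly, finsum_eq_sum_of_fintype,
    ← Equiv.sum_comp (Equiv.ofBijective _ (spKappa_bij k r)), Fin.sum_univ_two]
  refine congrArg₂ (· + ·) ?_ ?_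
  · congr 1
    · congr 1
      exact card_ct k r _ (fun v => by cases v <;> simp [spKappa, spCol])
    · congr 1
      exact card_lm k r _ (fun v => by cases v <;> simp [spKappa, spCol])
  · congr 1
    · congr 1
      exact card_lm k r _ (fun v => by cases v <;> simp [spKappa, spCol])
    · congr 1
      exact card_ct k r _ (fun v => by cases v <;> simp [spKappa, spCol])

lemma fin2_e1_ne {x : Fin 2} (h : x ≠ 0) : x = 1 := by revert h; revert x; decide
lemma fin2_zero_eq_add_one : ∀ x : Fin 2, (0 = x + 1) ↔ x = 1 := by decide
lemma fin2_one_eq_add_one : ∀ x : Fin 2, ((1 : Fin 2) = x + 1) ↔ x = 0 := by decide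
lemma fin2_one_iff_not_zero : ∀ x : Fin 2, (x = 1) ↔ ¬ (x = 0) := by decide

def mCol {k r : ℕ} (s : Fin (r+1) → Fin 2) (S : Finset (Fin (k-1))) : MatchV k r → Fin 2
  | .e0 i => s i
  | .e1 i => s i + 1
  | .iso j => if j ∈ S then 0 else 1

lemma mProper {k r : ℕ} (s : Fin (r+1) → Fin 2) (S : Finset (Fin (k-1))) :
    ProperMulti (matchGraph k r) (fun _ => 1) (fun v => {mCol s S v}) := by
  refine ⟨fun v => Finset.card_singleton _, ?_⟩
  intro u v huv
  rw [matchGraph, SimpleGraph.fromRel_adj] at huv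
  obtain ⟨hne, h | h⟩ := huv <;>
    cases h <;> simp only [mCol] <;>
    first | exact fin2_inter1 _ | exact fin2_inter2 _

noncomputable def mKappa (k r : ℕ) (p : (Fin (r+1) → Fin 2) × Finset (Fin (k-1))) :
    {κ : MatchV k r → Finset (Fin 2) // ProperMulti (matchGraph k r) (fun _ => 1) κ} :=
  ⟨fun v => {mCol p.1 p.2 v}, mProper p.1 p.2⟩

lemma mKappa_bij (k r : ℕ) : Function.Bijective (mKappa k r) := by
  constructor
  · rintro ⟨s, S⟩ ⟨s', S'⟩ h
    have hv := congrFun (congrArg Subtype.val h)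
    refine Prod.ext ?_ ?_
    · funext i
      have := hv (MatchV.e0 i)
      simpa [mKappa, mCol] using this
    · ext j
      have := hv (MatchV.iso j)
      simp only [mKappa, mCol, Finset.singleton_inj] at this
      by_cases hj : j ∈ S <;> by_cases hj' : j ∈ S' <;>
        simp [hj, hj'] at this ⊢
  · rintro ⟨κ, hcard, hadj⟩
    have hex : ∀ v, ∃ a, κ v = {a} := fun v => Finset.card_eq_one.mp (hcard v)
    choose c hc using hex
    have hdis : ∀ i : Fin (r+1), c (MatchV.e1 i) ≠ c (MatchV.e0 i) := by
      intro i hcc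
      have hadj' : κ (MatchV.e0 i) ∩ κ (MatchV.e1 i) = ∅ := by
        apply hadj
        rw [matchGraph, SimpleGraph.fromRel_adj]
        exact ⟨by simp, Or.inl (MatchRel.e i)⟩
      rw [hc _, hc _, hcc] at hadj'
      simp at hadj'
    refine ⟨⟨fun i => c (MatchV.e0 i), Finset.univ.filter fun j => c (MatchV.iso j) = 0⟩, ?_⟩
    apply Subtype.ext
    funext v
    show ({mCol _ _ v} : Finset (Fin 2)) = κ v
    rw [hc v]
    congr 1
    cases v with
    | e0 i => rfl
    | e1 i => exact (fin2_ne _ _ (hdis i)).symm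
    | iso j =>
      show (if j ∈ Finset.univ.filter (fun j => c (MatchV.iso j) = 0) then (0:Fin 2) else 1)
          = c (MatchV.iso j)
      by_cases hj : c (MatchV.iso j) = 0
      · simp [hj]
      · simp [hj, (fin2_e1_ne hj).symm]

lemma card_m0 (k r : ℕ) (s : Fin (r+1) → Fin 2) (S : Finset (Fin (k-1)))
    (p : MatchV k r → Prop) [DecidablePred p]
    (hp : ∀ v, p v ↔ ((0:Fin 2) = mCol s S v)) :
    (Finset.univ.filter p).card = r + 1 + S.card := by
  have he : Finset.univ.filter p
      = ((Finset.univ.filter fun i => s i = 0).image MatchV.e0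
          ∪ (Finset.univ.filter fun i => s i = 1).image MatchV.e1)
          ∪ S.image MatchV.iso := by
    ext v
    simp only [Finset.mem_filter, Finset.mem_univ, true_and, Finset.mem_union,
      Finset.mem_image, hp v]
    cases v with
    | e0 i =>
      simp only [mCol]
      constructor
      · intro h; exact Or.inl (Or.inl ⟨i, h.symm, rfl⟩)
      · rintro ((⟨i', hi, he⟩ | ⟨i', hi, he⟩) | ⟨j', hj, he⟩)
        · obtain rfl : i' = i := by simpa using he
          exact hi.symm
        · exact absurd he (by simp)
        · exact absurd he (by simp)
    | e1 i =>
      simp only [mCol, fin2_zero_eq_add_one]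
      constructor
      · intro h; exact Or.inl (Or.inr ⟨i, h, rfl⟩)
      · rintro ((⟨i', hi, he⟩ | ⟨i', hi, he⟩) | ⟨j', hj, he⟩)
        · exact absurd he (by simp)
        · obtain rfl : i' = i := by simpa using he
          exact hi
        · exact absurd he (by simp)
    | iso j =>
      simp only [mCol]
      constructor
      · intro h
        refine Or.inr ⟨j, ?_, rfl⟩
        by_contra hj
        rw [if_neg hj] at h
        exact absurd h (by decide)
      · rintro ((⟨i', hi, he⟩ | ⟨i', hi, he⟩) | ⟨j', hj, he⟩)
        · exact absurd he (by simp)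
        · exact absurd he (by simp)
        · obtain rfl : j' = j := by simpa using he
          rw [if_pos hj]
  rw [he, Finset.card_union_of_disjoint, Finset.card_union_of_disjoint]
  · rw [Finset.card_image_of_injective _ (fun a b h => by simpa using h),
      Finset.card_image_of_injective _ (fun a b h => by simpa using h),
      Finset.card_image_of_injective _ (fun a b h => by simpa using h)]
    have h1 : (Finset.univ.filter fun i => s i = 1)
        = (Finset.univ.filter fun i => ¬ (s i = 0)) :=
      Finset.filter_congr (fun i _ => fin2_one_iff_not_zero (s i))
    have h2 := Finset.card_filter_add_card_filter_not
      (s := (Finset.univ : Finset (Fin (r+1)))) (p := fun i => s i = 0)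
    rw [Finset.card_univ, Fintype.card_fin] at h2
    rw [h1]
    omega
  · simp [Finset.disjoint_left]
  · rw [Finset.disjoint_left]
    rintro a ha hb
    simp only [Finset.mem_union, Finset.mem_image, Finset.mem_filter] at ha hb
    obtain ⟨j, hj, rfl⟩ := hb
    rcases ha with (⟨i, -, he⟩ | ⟨i, -, he⟩) <;> simp at he

lemma card_m1 (k r : ℕ) (s : Fin (r+1) → Fin 2) (S : Finset (Fin (k-1)))
    (p : MatchV k r → Prop) [DecidablePred p]
    (hp : ∀ v, p v ↔ ((1:Fin 2) = mCol s S v)) :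
    (Finset.univ.filter p).card = r + 1 + (k - 1 - S.card) := by
  have he : Finset.univ.filter p
      = ((Finset.univ.filter fun i => s i = 1).image MatchV.e0
          ∪ (Finset.univ.filter fun i => s i = 0).image MatchV.e1)
          ∪ Sᶜ.image MatchV.iso := by
    ext v
    simp only [Finset.mem_filter, Finset.mem_univ, true_and, Finset.mem_union,
      Finset.mem_image, hp v, Finset.mem_compl]
    cases v with
    | e0 i =>
      simp only [mCol]
      constructor
      · intro h; exact Or.inl (Or.inl ⟨i, h.symm, rfl⟩)
      · rintro ((⟨i', hi, he⟩ | ⟨i', hi, he⟩) | ⟨j', hj, he⟩)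
        · obtain rfl : i' = i := by simpa using he
          exact hi.symm
        · exact absurd he (by simp)
        · exact absurd he (by simp)
    | e1 i =>
      simp only [mCol, fin2_one_eq_add_one]
      constructor
      · intro h; exact Or.inl (Or.inr ⟨i, h, rfl⟩)
      · rintro ((⟨i', hi, he⟩ | ⟨i', hi, he⟩) | ⟨j', hj, he⟩)
        · exact absurd he (by simp)
        · obtain rfl : i' = i := by simpa using he
          exact hi
        · exact absurd he (by simp)
    | iso j =>
      simp only [mCol]
      constructor
      · intro h
        refine Or.inr ⟨j, ?_, rfl⟩
        intro hj
        rw [if_pos hj] at h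
        exact absurd h (by decide)
      · rintro ((⟨i', hi, he⟩ | ⟨i', hi, he⟩) | ⟨j', hj, he⟩)
        · exact absurd he (by simp)
        · exact absurd he (by simp)
        · obtain rfl : j' = j := by simpa using he
          rw [if_neg hj]
  rw [he, Finset.card_union_of_disjoint, Finset.card_union_of_disjoint]
  · rw [Finset.card_image_of_injective _ (fun a b h => by simpa using h),
      Finset.card_image_of_injective _ (fun a b h => by simpa using h),
      Finset.card_image_of_injective _ (fun a b h => by simpa using h)]
    have h1 : (Finset.univ.filter fun i => s i = 1)
        = (Finset.univ.filter fun i => ¬ (s i = 0)) :=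
      Finset.filter_congr (fun i _ => fin2_one_iff_not_zero (s i))
    have h2 := Finset.card_filter_add_card_filter_not
      (s := (Finset.univ : Finset (Fin (r+1)))) (p := fun i => s i = 0)
    rw [Finset.card_univ, Fintype.card_fin] at h2
    have h3 : Sᶜ.card = k - 1 - S.card := by
      rw [Finset.card_compl, Fintype.card_fin]
    rw [h1, h3]
    omega
  · simp [Finset.disjoint_left]
  · rw [Finset.disjoint_left]
    rintro a ha hb
    simp only [Finset.mem_union, Finset.mem_image, Finset.mem_filter] at ha hb
    obtain ⟨j, hj, rfl⟩ := hb
    rcases ha with (⟨i, -, he⟩ | ⟨i, -, he⟩) <;> simp at he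

lemma xpoly_match (k r : ℕ) :
    Xpoly (matchGraph k r) (fun _ => 1) =
      ∑ q : (Fin (r+1) → Fin 2) × Finset (Fin (k-1)),
        X 0 ^ (r + 1 + q.2.card) * X 1 ^ (r + 1 + (k - 1 - q.2.card)) := by
  haveI : Fintype {κ : MatchV k r → Finset (Fin 2) // ProperMulti (matchGraph k r) (fun _ => 1) κ} :=
    Fintype.ofFinite _
  rw [Xpoly, finsum_eq_sum_of_fintype,
    ← Equiv.sum_comp (Equiv.ofBijective _ (mKappa_bij k r))]
  apply Finset.sum_congr rfl
  intro q _
  congr 1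
  · congr 1
    exact card_m0 k r q.1 q.2 _ (fun v => by simp [mKappa])
  · congr 1
    exact card_m1 k r q.1 q.2 _ (fun v => by simp [mKappa])

lemma coeff_spider (k r a b : ℕ) :
    MvPolynomial.coeff (Finsupp.single 0 a + Finsupp.single 1 b)
      (Xpoly (spiderKR k r) fun _ => 1)
    = (if r+1 = a ∧ k+r = b then 1 else 0) + (if k+r = a ∧ r+1 = b then 1 else 0) := by
  rw [xpoly_spider, MvPolynomial.coeff_add, coeff_mono, coeff_mono]

lemma coeff_match (k r a b : ℕ) :
    MvPolynomial.coeff (Finsupp.single 0 a + Finsupp.single 1 b)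
      (Xpoly (matchGraph k r) fun _ => 1)
    = 2^(r+1) * (if r+1 ≤ a ∧ a ≤ r+1+(k-1) ∧ a + b = (r+1)+((r+1)+(k-1))
        then ((k-1).choose (a-(r+1)) : ℤ) else 0) := by
  rw [xpoly_match, MvPolynomial.coeff_sum]
  simp only [coeff_mono]
  rw [Fintype.sum_prod_type]
  have hinner : ∀ s : Fin (r+1) → Fin 2,
      (∑ S : Finset (Fin (k-1)),
        (if r + 1 + S.card = a ∧ r + 1 + (k - 1 - S.card) = b then (1:ℤ) else 0))
      = (if r+1 ≤ a ∧ a ≤ r+1+(k-1) ∧ a + b = (r+1)+((r+1)+(k-1))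
          then ((k-1).choose (a-(r+1)) : ℤ) else 0) := by
    intro s
    rw [Finset.sum_boole]
    by_cases hcond : r+1 ≤ a ∧ a ≤ r+1+(k-1) ∧ a + b = (r+1)+((r+1)+(k-1))
    · rw [if_pos hcond]
      have hfe : (Finset.univ.filter fun S : Finset (Fin (k-1)) =>
            r + 1 + S.card = a ∧ r + 1 + (k - 1 - S.card) = b)
          = Finset.univ.filter fun S => S.card = a - (r+1) := by
        apply Finset.filter_congr
        intro S _
        have hS : S.card ≤ k-1 := by simpa using Finset.card_le_univ S
        constructor <;> intro h <;> omega
      rw [hfe, card_filter_card_eq]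
    · rw [if_neg hcond]
      have hfe : (Finset.univ.filter fun S : Finset (Fin (k-1)) =>
            r + 1 + S.card = a ∧ r + 1 + (k - 1 - S.card) = b) = ∅ := by
        apply Finset.filter_false_of_mem
        intro S _
        have hS : S.card ≤ k-1 := by simpa using Finset.card_le_univ S
        intro h
        exact hcond (by omega)
      rw [hfe]
      simp
  rw [Finset.sum_congr rfl (fun s _ => hinner s), Finset.sum_const, Finset.card_univ,
    Fintype.card_fun, Fintype.card_fin, Fintype.card_fin, nsmul_eq_mul]
  push_cast
  ring

theorem spiderKR_schurCoeffs_aux (k r : ℕ) (hk : 3 ≤ k) :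
    schurCoeff (Xpoly (spiderKR k r) fun _ => 1) (r + k) (r + 1) = 1 ∧
    schurCoeff (Xpoly (spiderKR k r) fun _ => 1) (r + k - 1) (r + 2) = -1 ∧
    (∀ a b : ℕ, b ≤ a → ¬(a = r + k ∧ b = r + 1) → ¬(a = r + k - 1 ∧ b = r + 2) →
      schurCoeff (Xpoly (spiderKR k r) fun _ => 1) a b = 0) ∧
    (2 : ℤ) ^ (r + 1) ≤ schurCoeff (Xpoly (matchGraph k r) fun _ => 1) (r + k) (r + 1) ∧
    (2 : ℤ) ^ (r + 1) ≤
      schurCoeff (Xpoly (matchGraph k r) fun _ => 1) (r + k - 1) (r + 2) ∧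
    ∀ a b : ℕ, b ≤ a → 0 ≤ schurCoeff (Xpoly (matchGraph k r) fun _ => 1) a b := by
  have hp2 : (0:ℤ) < 2^(r+1) := by positivity
  refine ⟨?_, ?_, ?_, ?_, ?_, ?_⟩
  · simp only [schurCoeff, coeff_spider, and_true, true_and, eq_self_iff_true]
    split_ifs <;> first | omega | exact absurd ‹False› not_false
  · simp only [schurCoeff, coeff_spider, and_true, true_and, eq_self_iff_true]
    split_ifs <;> first | omega | exact absurd ‹False› not_false
  · intro a b hab h1 h2
    simp only [schurCoeff, coeff_spider, and_true, true_and, eq_self_iff_true]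
    split_ifs <;> first | omega | exact absurd ‹False› not_false
  · simp only [schurCoeff, coeff_match]
    have e1 : r + k - (r+1) = k - 1 := by omega
    have hc1 : r+1 ≤ r+k ∧ r+k ≤ r+1+(k-1) ∧ (r+k) + (r+1) = (r+1)+((r+1)+(k-1)) := by omega
    have hc2 : ¬ (r+1 ≤ r+k+1 ∧ r+k+1 ≤ r+1+(k-1) ∧ (r+k+1) + (r+1-1) = (r+1)+((r+1)+(k-1))) := by
      omega
    rw [if_neg (show ¬ (r+1 = 0) by omega), if_pos hc1, if_neg hc2, e1, Nat.choose_self]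
    simp
  · simp only [schurCoeff, coeff_match]
    have e1 : r + k - 1 - (r+1) = (k-1) - 1 := by omega
    have e2 : r + k - 1 + 1 - (r+1) = k - 1 := by omega
    have hc1 : r+1 ≤ r+k-1 ∧ r+k-1 ≤ r+1+(k-1) ∧ (r+k-1) + (r+2) = (r+1)+((r+1)+(k-1)) := by
      omega
    have hc2 : r+1 ≤ r+k-1+1 ∧ r+k-1+1 ≤ r+1+(k-1) ∧
        (r+k-1+1) + (r+2-1) = (r+1)+((r+1)+(k-1)) := by omega
    rw [if_neg (show ¬ (r+2 = 0) by omega), if_pos hc1, if_pos hc2, e1, e2,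
      Nat.choose_self, Nat.choose_symm (show 1 ≤ k - 1 by omega), Nat.choose_one_right]
    push_cast
    have h2 : (2:ℤ) ≤ ((k-1 : ℕ) : ℤ) := by exact_mod_cast (show 2 ≤ k - 1 by omega)
    nlinarith [mul_le_mul_of_nonneg_left h2 (le_of_lt hp2)]
  · intro a b hab
    simp only [schurCoeff, coeff_match]
    by_cases hb : b = 0
    · rw [if_pos hb]
      split_ifs with h
      · simp only [sub_zero]
        positivity
      · simp
    · rw [if_neg hb]
      by_cases h2 : r+1 ≤ a+1 ∧ a+1 ≤ r+1+(k-1) ∧ (a+1) + (b-1) = (r+1)+((r+1)+(k-1))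
      · have h1 : r+1 ≤ a ∧ a ≤ r+1+(k-1) ∧ a + b = (r+1)+((r+1)+(k-1)) := by omega
        rw [if_pos h2, if_pos h1]
        have ej : a + 1 - (r+1) = (a - (r+1)) + 1 := by omega
        rw [ej, sub_nonneg]
        apply mul_le_mul_of_nonneg_left _ (le_of_lt hp2)
        exact_mod_cast choose_succ_le (k-1) (a - (r+1)) (by omega)
      · rw [if_neg h2]
        split_ifs with h
        · simp only [mul_zero, sub_zero]
          positivity
        · simp

end Aux

/-- Let `k ≥ 3`, `r ≥ 0`, and let `X` be the two-variable chromatic symmetric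
function of the spider `S(1ᵏ,2ʳ)`.  Then `c_{(r+k,r+1)}(X) = 1`,
`c_{(r+k-1,r+2)}(X) = -1`, and all other two-row Schur coefficients of `X` vanish.
Moreover, for the graph `H` of `r+1` disjoint edges plus `k-1` isolated vertices,
`c_{(r+k,r+1)}(X_H) ≥ 2^{r+1}`, `c_{(r+k-1,r+2)}(X_H) ≥ 2^{r+1}`, and all two-row
Schur coefficients of `X_H` are nonnegative. -/
theorem spiderKR_schurCoeffs (k r : ℕ) (hk : 3 ≤ k) :
    schurCoeff (Xpoly (spiderKR k r) fun _ => 1) (r + k) (r + 1) = 1 ∧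
    schurCoeff (Xpoly (spiderKR k r) fun _ => 1) (r + k - 1) (r + 2) = -1 ∧
    (∀ a b : ℕ, b ≤ a → ¬(a = r + k ∧ b = r + 1) → ¬(a = r + k - 1 ∧ b = r + 2) →
      schurCoeff (Xpoly (spiderKR k r) fun _ => 1) a b = 0) ∧
    (2 : ℤ) ^ (r + 1) ≤ schurCoeff (Xpoly (matchGraph k r) fun _ => 1) (r + k) (r + 1) ∧
    (2 : ℤ) ^ (r + 1) ≤
      schurCoeff (Xpoly (matchGraph k r) fun _ => 1) (r + k - 1) (r + 2) ∧
    ∀ a b : ℕ, b ≤ a → 0 ≤ schurCoeff (Xpoly (matchGraph k r) fun _ => 1) a b := by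
  exact spiderKR_schurCoeffs_aux k r hk
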